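/- Let Γ be a bipartite distance-regular graph of diameter 3 with intersection array {k, k−1, k−μ; 1, μ, k}, where 1 ≤ μ ≤ k−1 (i.e., a distance-biregular graph with k₀ = k₁ = k, D₀ = D₁ = 3, and c_{0,2} = c_{1,2} = μ). Then Γ has the M-property if and only if 4k/5 ≤ μ ≤ k−1; moreover, these inequalities imply k ≥ 5. -/

import Mathlib

open Finset SimpleGraph Matrix

noncomputable def Dmat {V : Type} [Fintype V] [DecidableEq V] (G : SimpleGraph V)
    (i : ℕ) : Matrix V V ℝ := Matrix.of fun x y => if G.dist x y = i then 1 else 0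

@[simp] lemma Dmat_apply {V : Type} [Fintype V] [DecidableEq V] (G : SimpleGraph V)
    (i : ℕ) (x y : V) : Dmat G i x y = if G.dist x y = i then 1 else 0 := rfl

def Jmat (V : Type) [Fintype V] [DecidableEq V] : Matrix V V ℝ := Matrix.of fun _ _ => 1

@[simp] lemma Jmat_apply {V : Type} [Fintype V] [DecidableEq V] (x y : V) :
    Jmat V x y = 1 := rfl

lemma gi_unique {n : Type} [Fintype n] [DecidableEq n]
    (L X M : Matrix n n ℝ)
    (h1 : L * X * L = L) (h2 : X * L * X = X) (h3 : L * X = X * L)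
    (g1 : L * M * L = L) (g2 : M * L * M = M) (g3 : L * M = M * L) :
    X = M := by
  have e1 : L * X = M * L := by
    calc L * X = L * M * L * X := by rw [g1]
    _ = M * L * L * X := by rw [g3]
    _ = M * (L * (X * L)) := by simp only [Matrix.mul_assoc]; rw [h3]
    _ = M * L := by rw [← Matrix.mul_assoc L X L, h1]
  calc X = X * L * X := h2.symm
  _ = X * (L * M) := by rw [Matrix.mul_assoc, e1, ← g3]
  _ = L * X * M := by rw [← Matrix.mul_assoc, ← h3]
  _ = M * L * M := by rw [e1]
  _ = M := g2

lemma count_partition {V : Type} [Fintype V] [DecidableEq V]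
    (G : SimpleGraph V) [DecidableRel G.Adj] (hconn : G.Connected)
    (k : ℕ) (hdeg : ∀ x : V, G.degree x = k) (x y : V) (j : ℕ)
    (hj : G.dist y x = j) (hj1 : 1 ≤ j) :
    (univ.filter (fun z => G.dist y z = j - 1 ∧ G.Adj x z)).card
    + (univ.filter (fun z => G.dist y z = j ∧ G.Adj x z)).card
    + (univ.filter (fun z => G.dist y z = j + 1 ∧ G.Adj x z)).card = k := by
  have htri : ∀ z : V, G.Adj x z →
      (G.dist y z = j - 1 ∨ G.dist y z = j ∨ G.dist y z = j + 1) := by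
    intro z hz
    have hxz : G.dist x z = 1 := dist_eq_one_iff_adj.mpr hz
    have hzx : G.dist z x = 1 := dist_eq_one_iff_adj.mpr hz.symm
    have h1 : G.dist y z ≤ G.dist y x + G.dist x z := hconn.dist_triangle
    have h2 : G.dist y x ≤ G.dist y z + G.dist z x := hconn.dist_triangle
    omega
  have hunion : univ.filter (fun z => G.Adj x z)
      = ((univ.filter (fun z => G.dist y z = j - 1 ∧ G.Adj x z))
        ∪ (univ.filter (fun z => G.dist y z = j ∧ G.Adj x z)))
        ∪ (univ.filter (fun z => G.dist y z = j + 1 ∧ G.Adj x z)) := by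
    ext z
    simp only [mem_filter, mem_univ, true_and, mem_union]
    constructor
    · intro hz
      rcases htri z hz with h | h | h
      · exact Or.inl (Or.inl ⟨h, hz⟩)
      · exact Or.inl (Or.inr ⟨h, hz⟩)
      · exact Or.inr ⟨h, hz⟩
    · rintro ((⟨_, hz⟩ | ⟨_, hz⟩) | ⟨_, hz⟩) <;> exact hz
  have hd12 : Disjoint (univ.filter (fun z => G.dist y z = j - 1 ∧ G.Adj x z))
      (univ.filter (fun z => G.dist y z = j ∧ G.Adj x z)) := by
    simp only [Finset.disjoint_left, mem_filter, mem_univ, true_and]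
    rintro a ⟨h1, -⟩ ⟨h2, -⟩; omega
  have hd3 : Disjoint ((univ.filter (fun z => G.dist y z = j - 1 ∧ G.Adj x z))
      ∪ (univ.filter (fun z => G.dist y z = j ∧ G.Adj x z)))
      (univ.filter (fun z => G.dist y z = j + 1 ∧ G.Adj x z)) := by
    simp only [Finset.disjoint_left, mem_union, mem_filter, mem_univ, true_and]
    rintro a (⟨h1, -⟩ | ⟨h1, -⟩) ⟨h2, -⟩ <;> omega
  have hS : (univ.filter (fun z => G.Adj x z)).card = k := by
    rw [← neighborFinset_eq_filter, card_neighborFinset_eq_degree, hdeg]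
  rw [hunion, card_union_of_disjoint hd3, card_union_of_disjoint hd12] at hS
  exact hS

lemma AD_card {V : Type} [Fintype V] [DecidableEq V] (G : SimpleGraph V)
    [DecidableRel G.Adj] (i : ℕ) (x y : V) :
    (G.adjMatrix ℝ * Dmat G i) x y
      = ((univ.filter (fun z => G.dist y z = i ∧ G.Adj x z)).card : ℝ) := by
  rw [adjMatrix_mul_apply, neighborFinset_eq_filter]
  rw [Finset.sum_filter]
  rw [← Finset.sum_boole]
  apply Finset.sum_congr rfl
  intro z _
  have hcomm : G.dist z y = G.dist y z := SimpleGraph.dist_comm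
  rw [Dmat_apply, hcomm]
  by_cases h1 : G.Adj x z <;> by_cases h2 : G.dist y z = i <;> simp [h1, h2]

set_option maxHeartbeats 1000000 in
theorem stmt19 {V : Type} [Fintype V] [DecidableEq V]
    (G : SimpleGraph V) [DecidableRel G.Adj]
    (hconn : G.Connected)
    (k μ : ℕ) (hμ1 : 1 ≤ μ) (hμk : μ ≤ k - 1)
    (hbip : ∃ σ : V → Fin 2, ∀ x y : V, G.Adj x y → σ x ≠ σ y)
    (hdiamub : ∀ x y : V, G.dist x y ≤ 3)
    (hdiam3 : ∃ x y : V, G.dist x y = 3)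
    (hdeg : ∀ x : V, G.degree x = k)
    (c b : ℕ → ℕ)
    (hc1 : c 1 = 1) (hc2 : c 2 = μ) (hc3 : c 3 = k)
    (hb0 : b 0 = k) (hb1 : b 1 = k - 1) (hb2 : b 2 = k - μ) (hb3 : b 3 = 0)
    (hc : ∀ (x y : V) (i : ℕ), G.dist x y = i →
      (Finset.univ.filter (fun z => G.dist x z = i - 1 ∧ G.Adj y z)).card = c i)
    (hb : ∀ (x y : V) (i : ℕ), G.dist x y = i →
      (Finset.univ.filter (fun z => G.dist x z = i + 1 ∧ G.Adj y z)).card = b i)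
    (Lsharp : Matrix V V ℝ)
    (hLs1 : G.lapMatrix ℝ * Lsharp * G.lapMatrix ℝ = G.lapMatrix ℝ)
    (hLs2 : Lsharp * G.lapMatrix ℝ * Lsharp = Lsharp)
    (hLs3 : G.lapMatrix ℝ * Lsharp = Lsharp * G.lapMatrix ℝ) :
    ((∀ x y : V, x ≠ y → Lsharp x y ≤ 0) ↔ (4 * k ≤ 5 * μ ∧ μ ≤ k - 1)) ∧
    (4 * k ≤ 5 * μ ∧ μ ≤ k - 1 → 5 ≤ k) := by
  obtain ⟨x0, y0, hxy0⟩ := hdiam3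
  haveI : Nonempty V := ⟨x0⟩
  have hk2 : 2 ≤ k := by omega
  have hμkn : μ ≤ k := by omega
  set kR : ℝ := (k : ℝ) with hkRdef
  set μR : ℝ := (μ : ℝ) with hμRdef
  set nR : ℝ := (Fintype.card V : ℝ) with hnRdef
  have hkR2 : (2:ℝ) ≤ kR := by rw [hkRdef]; exact_mod_cast hk2
  have hμR1 : (1:ℝ) ≤ μR := by rw [hμRdef]; exact_mod_cast hμ1
  have hμRk : μR ≤ kR - 1 := by
    have : (μ:ℝ) ≤ ((k - 1 : ℕ) : ℝ) := by exact_mod_cast hμk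
    rwa [Nat.cast_sub (by omega), Nat.cast_one] at this
  have hn1 : (1:ℝ) ≤ nR := by
    have h : 1 ≤ Fintype.card V := Fintype.card_pos
    rw [hnRdef]; exact_mod_cast h
  have hk0 : kR ≠ 0 := by linarith
  have hμ0 : μR ≠ 0 := by linarith
  have hn0 : nR ≠ 0 := by linarith
  -- D 1 = A
  have hD1 : Dmat G 1 = G.adjMatrix ℝ := by
    ext x y
    simp [dist_eq_one_iff_adj]
  -- sum of distance matrices is J
  have hJsum : (1 : Matrix V V ℝ) + G.adjMatrix ℝ + Dmat G 2 + Dmat G 3 = Jmat V := by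
    ext x y
    rw [← hD1]
    by_cases hxy : x = y
    · subst hxy
      simp [Matrix.one_apply, SimpleGraph.dist_self]
    · have h1 : G.dist x y ≠ 0 := fun h => hxy (hconn.dist_eq_zero_iff.mp h)
      have h3 := hdiamub x y
      simp only [Matrix.add_apply, Matrix.one_apply_ne hxy, Dmat_apply, Jmat_apply]
      obtain ⟨j, hj⟩ : ∃ j, G.dist x y = j := ⟨_, rfl⟩
      rw [hj]
      rw [hj] at h1 h3
      interval_cases j
      · exact absurd rfl h1
      all_goals norm_num
  -- the three product identities
  have hid1 : G.adjMatrix ℝ * G.adjMatrix ℝ = kR • (1 : Matrix V V ℝ) + μR • Dmat G 2 := by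
    nth_rewrite 2 [← hD1]
    ext x y
    rw [AD_card]
    obtain ⟨j, hj⟩ : ∃ j, G.dist y x = j := ⟨_, rfl⟩
    have hxyd : G.dist x y = j := by rw [SimpleGraph.dist_comm]; exact hj
    have hj3 : j ≤ 3 := hxyd ▸ hdiamub x y
    simp only [Matrix.add_apply, Matrix.smul_apply, Matrix.one_apply, Dmat_apply, hxyd,
      smul_eq_mul]
    interval_cases j
    · have hxy : x = y := (hconn.dist_eq_zero_iff.mp hxyd)
      have e := hb y x 0 hj
      simp only [Nat.reduceAdd] at e
      rw [e, hb0]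
      simp [hxy, hkRdef]
    · have hxy : x ≠ y := by
        intro h; subst h; rw [SimpleGraph.dist_self] at hxyd; omega
      have e1 := hc y x 1 hj
      have e2 := hb y x 1 hj
      have e3 := count_partition G hconn k hdeg x y 1 hj (by norm_num)
      simp only [Nat.reduceAdd, Nat.reduceSub] at e1 e2 e3
      rw [hc1] at e1; rw [hb1] at e2
      have hz : (univ.filter (fun z => G.dist y z = 1 ∧ G.Adj x z)).card = 0 := by omega
      rw [hz]
      simp [hxy]
    · have hxy : x ≠ y := by
        intro h; subst h; rw [SimpleGraph.dist_self] at hxyd; omega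
      have e1 := hc y x 2 hj
      simp only [Nat.reduceSub] at e1
      rw [hc2] at e1
      rw [e1]
      simp [hxy, hμRdef]
    · have hxy : x ≠ y := by
        intro h; subst h; rw [SimpleGraph.dist_self] at hxyd; omega
      have hz : (univ.filter (fun z => G.dist y z = 1 ∧ G.Adj x z)).card = 0 := by
        rw [Finset.card_eq_zero, Finset.filter_eq_empty_iff]
        rintro z - ⟨hz1, hz2⟩
        have hzx : G.dist z x = 1 := dist_eq_one_iff_adj.mpr hz2.symm
        have htr : G.dist y x ≤ G.dist y z + G.dist z x := hconn.dist_triangle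
        omega
      rw [hz]
      simp [hxy]
  have hid2 : G.adjMatrix ℝ * Dmat G 2 = (kR - 1) • Dmat G 1 + kR • Dmat G 3 := by
    ext x y
    rw [AD_card]
    obtain ⟨j, hj⟩ : ∃ j, G.dist y x = j := ⟨_, rfl⟩
    have hxyd : G.dist x y = j := by rw [SimpleGraph.dist_comm]; exact hj
    have hj3 : j ≤ 3 := hxyd ▸ hdiamub x y
    simp only [Matrix.add_apply, Matrix.smul_apply, Dmat_apply, hxyd, smul_eq_mul]
    interval_cases j
    · have hxy : x = y := (hconn.dist_eq_zero_iff.mp hxyd)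
      subst hxy
      have hz : (univ.filter (fun z => G.dist x z = 2 ∧ G.Adj x z)).card = 0 := by
        rw [Finset.card_eq_zero, Finset.filter_eq_empty_iff]
        rintro z - ⟨hz1, hz2⟩
        rw [dist_eq_one_iff_adj.mpr hz2] at hz1
        omega
      rw [hz]; norm_num
    · have e2 := hb y x 1 hj
      simp only [Nat.reduceAdd] at e2
      rw [hb1] at e2
      rw [e2, Nat.cast_sub (by omega : 1 ≤ k)]
      norm_num [hkRdef]
    · have e1 := hc y x 2 hj
      have e2 := hb y x 2 hj
      have e3 := count_partition G hconn k hdeg x y 2 hj (by norm_num)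
      simp only [Nat.reduceAdd, Nat.reduceSub] at e1 e2 e3
      rw [hc2] at e1; rw [hb2] at e2
      have hz : (univ.filter (fun z => G.dist y z = 2 ∧ G.Adj x z)).card = 0 := by omega
      rw [hz]; norm_num
    · have e1 := hc y x 3 hj
      simp only [Nat.reduceSub] at e1
      rw [hc3] at e1
      rw [e1]; norm_num [hkRdef]
  have hid3 : G.adjMatrix ℝ * Dmat G 3 = (kR - μR) • Dmat G 2 := by
    ext x y
    rw [AD_card]
    obtain ⟨j, hj⟩ : ∃ j, G.dist y x = j := ⟨_, rfl⟩
    have hxyd : G.dist x y = j := by rw [SimpleGraph.dist_comm]; exact hj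
    have hj3 : j ≤ 3 := hxyd ▸ hdiamub x y
    simp only [Matrix.smul_apply, Dmat_apply, hxyd, smul_eq_mul]
    interval_cases j
    · have hxy : x = y := (hconn.dist_eq_zero_iff.mp hxyd)
      subst hxy
      have hz : (univ.filter (fun z => G.dist x z = 3 ∧ G.Adj x z)).card = 0 := by
        rw [Finset.card_eq_zero, Finset.filter_eq_empty_iff]
        rintro z - ⟨hz1, hz2⟩
        rw [dist_eq_one_iff_adj.mpr hz2] at hz1
        omega
      rw [hz]; norm_num
    · have hz : (univ.filter (fun z => G.dist y z = 3 ∧ G.Adj x z)).card = 0 := by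
        rw [Finset.card_eq_zero, Finset.filter_eq_empty_iff]
        rintro z - ⟨hz1, hz2⟩
        have hxz : G.dist x z = 1 := dist_eq_one_iff_adj.mpr hz2
        have htr : G.dist y z ≤ G.dist y x + G.dist x z := hconn.dist_triangle
        omega
      rw [hz]; norm_num
    · have e2 := hb y x 2 hj
      simp only [Nat.reduceAdd] at e2
      rw [hb2] at e2
      rw [e2, Nat.cast_sub hμkn]
      norm_num [hkRdef, hμRdef]
    · have e1 := hc y x 3 hj
      have e2 := hb y x 3 hj
      have e3 := count_partition G hconn k hdeg x y 3 hj (by norm_num)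
      simp only [Nat.reduceAdd, Nat.reduceSub] at e1 e2 e3
      rw [hc3] at e1; rw [hb3] at e2
      have hz : (univ.filter (fun z => G.dist y z = 3 ∧ G.Adj x z)).card = 0 := by omega
      rw [hz]; norm_num
  -- row sums
  have hAJ : G.adjMatrix ℝ * Jmat V = kR • Jmat V := by
    ext x y
    rw [adjMatrix_mul_apply]
    simp [Jmat, hdeg, hkRdef]
  have hJJ : Jmat V * Jmat V = nR • Jmat V := by
    ext x y
    simp [Matrix.mul_apply, Jmat, hnRdef, Finset.card_univ]
  have hD2sym : (Dmat G 2)ᵀ = Dmat G 2 := by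
    ext x y
    simp only [Matrix.transpose_apply, Dmat_apply]
    rw [SimpleGraph.dist_comm]
  have hD3sym : (Dmat G 3)ᵀ = Dmat G 3 := by
    ext x y
    simp only [Matrix.transpose_apply, Dmat_apply]
    rw [SimpleGraph.dist_comm]
  have hJsym : (Jmat V)ᵀ = Jmat V := by
    ext x y; rfl
  have hD2J : Dmat G 2 * Jmat V = ((kR^2 - kR)/μR) • Jmat V := by
    have e : G.adjMatrix ℝ * (G.adjMatrix ℝ * Jmat V)
        = (kR • (1:Matrix V V ℝ) + μR • Dmat G 2) * Jmat V := by
      rw [← Matrix.mul_assoc, hid1]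
    rw [hAJ, Matrix.mul_smul, hAJ, Matrix.add_mul, Matrix.smul_mul, Matrix.smul_mul,
      Matrix.one_mul, smul_smul] at e
    have e2 : μR • (Dmat G 2 * Jmat V) = (kR*kR - kR) • Jmat V := by
      rw [sub_smul, e]; abel
    calc Dmat G 2 * Jmat V = (μR⁻¹*μR) • (Dmat G 2 * Jmat V) := by
          rw [inv_mul_cancel₀ hμ0, one_smul]
    _ = μR⁻¹ • ((kR*kR - kR) • Jmat V) := by rw [mul_smul, e2]
    _ = ((kR^2 - kR)/μR) • Jmat V := by
          rw [smul_smul]; congr 1; field_simp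
  have hD3J : Dmat G 3 * Jmat V = ((kR-1)*(kR-μR)/μR) • Jmat V := by
    have e : G.adjMatrix ℝ * (Dmat G 2 * Jmat V)
        = ((kR - 1) • Dmat G 1 + kR • Dmat G 3) * Jmat V := by
      rw [← Matrix.mul_assoc, hid2]
    rw [hD2J, Matrix.mul_smul, hAJ, Matrix.add_mul, Matrix.smul_mul, Matrix.smul_mul,
      hD1, hAJ, smul_smul, smul_smul] at e
    have e2 : kR • (Dmat G 3 * Jmat V) = ((kR^2 - kR)/μR*kR - (kR-1)*kR) • Jmat V := by
      rw [sub_smul, e]; abel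
    calc Dmat G 3 * Jmat V = (kR⁻¹*kR) • (Dmat G 3 * Jmat V) := by
          rw [inv_mul_cancel₀ hk0, one_smul]
    _ = kR⁻¹ • (((kR^2 - kR)/μR*kR - (kR-1)*kR) • Jmat V) := by rw [mul_smul, e2]
    _ = ((kR-1)*(kR-μR)/μR) • Jmat V := by
          rw [smul_smul]; congr 1; field_simp
  -- the value of n
  have hJsum' : Jmat V * Jmat V
      = (1 + kR + (kR^2-kR)/μR + (kR-1)*(kR-μR)/μR) • Jmat V := by
    nth_rewrite 1 [← hJsum]
    rw [Matrix.add_mul, Matrix.add_mul, Matrix.add_mul, Matrix.one_mul, hAJ, hD2J, hD3J]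
    module
  have hneq : nR = 1 + kR + (kR^2-kR)/μR + (kR-1)*(kR-μR)/μR := by
    have h := hJJ.symm.trans hJsum'
    have h2 := congrFun (congrFun h x0) x0
    simpa using h2
  have hnval : nR = (2*kR^2 - 2*kR + 2*μR)/μR := by
    rw [hneq]; field_simp; ring
  have hden : 2*kR^2 - 2*kR + 2*μR ≠ 0 := by nlinarith
  -- the candidate group inverse
  set a1 : ℝ := ((kR-1)*(2*kR-μR)^2 - kR*μR*(kR-1+μR)) / (nR^2*kR*μR^2) with ha1
  set a2 : ℝ := a1 - (2*kR-μR)/(nR*kR*μR) with ha2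
  set a3 : ℝ := a2 - 1/(nR*kR) with ha3
  set a0 : ℝ := a1 + (nR-1)/(nR*kR) with ha0
  set Mm : Matrix V V ℝ :=
    a0 • (1:Matrix V V ℝ) + a1 • G.adjMatrix ℝ + a2 • Dmat G 2 + a3 • Dmat G 3 with hMm
  have hs1 : kR * a0 - kR * a1 = 1 - nR⁻¹ := by
    rw [ha0]; field_simp; ring
  have hs2 : kR * a1 - a0 - (kR-1) * a2 = -nR⁻¹ := by
    rw [ha0, ha2, hnval]; field_simp; ring
  have hs3 : kR * a2 - μR * a1 - (kR-μR) * a3 = -nR⁻¹ := by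
    rw [ha3, ha2]; field_simp; ring
  have hs4 : kR * a3 - kR * a2 = -nR⁻¹ := by
    rw [ha3]; field_simp; ring
  have hMJ0 : a0 + a1 * kR + a2 * ((kR^2-kR)/μR) + a3 * ((kR-1)*(kR-μR)/μR) = 0 := by
    rw [ha0, ha3, ha2, ha1, hnval]; field_simp; ring
  have hL : G.lapMatrix ℝ = kR • (1:Matrix V V ℝ) - G.adjMatrix ℝ := by
    ext x y
    by_cases hxy : x = y <;>
      simp [SimpleGraph.lapMatrix, SimpleGraph.degMatrix, Matrix.diagonal_apply, hdeg, hxy,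
        Matrix.one_apply, hkRdef]
  have hLM : G.lapMatrix ℝ * Mm = 1 - nR⁻¹ • Jmat V := by
    rw [hL, hMm, ← hJsum]
    simp only [Matrix.sub_mul, Matrix.mul_add, Matrix.add_mul, Matrix.mul_smul,
      Matrix.smul_mul, Matrix.one_mul, Matrix.mul_one, hid1, hid2, hid3, hD1]
    match_scalars
    · linear_combination hs1
    · linear_combination hs2
    · linear_combination hs3
    · linear_combination hs4
  have hMsym : Mmᵀ = Mm := by
    rw [hMm]
    simp only [Matrix.transpose_add, Matrix.transpose_smul, Matrix.transpose_one,
      transpose_adjMatrix, hD2sym, hD3sym]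
  have hLsym : (G.lapMatrix ℝ)ᵀ = G.lapMatrix ℝ := isSymm_lapMatrix ℝ G
  have hML : Mm * G.lapMatrix ℝ = 1 - nR⁻¹ • Jmat V := by
    have h := congrArg Matrix.transpose hLM
    rw [Matrix.transpose_mul, hMsym, hLsym, Matrix.transpose_sub, Matrix.transpose_one,
      Matrix.transpose_smul, hJsym] at h
    exact h
  have hLJ : G.lapMatrix ℝ * Jmat V = 0 := by
    rw [hL, Matrix.sub_mul, Matrix.smul_mul, Matrix.one_mul, hAJ, sub_self]
  have hJL : Jmat V * G.lapMatrix ℝ = 0 := by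
    have h := congrArg Matrix.transpose hLJ
    rw [Matrix.transpose_mul, hLsym, hJsym, Matrix.transpose_zero] at h
    exact h
  have hMJ : Mm * Jmat V = 0 := by
    rw [hMm]
    simp only [Matrix.add_mul, Matrix.smul_mul, Matrix.one_mul, hAJ, hD2J, hD3J, smul_smul]
    rw [← add_smul, ← add_smul, ← add_smul, hMJ0, zero_smul]
  have hJM : Jmat V * Mm = 0 := by
    have h := congrArg Matrix.transpose hMJ
    rw [Matrix.transpose_mul, hMsym, hJsym, Matrix.transpose_zero] at h
    exact h
  have g1 : G.lapMatrix ℝ * Mm * G.lapMatrix ℝ = G.lapMatrix ℝ := by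
    rw [hLM, Matrix.sub_mul, Matrix.one_mul, Matrix.smul_mul, hJL, smul_zero, sub_zero]
  have g2 : Mm * G.lapMatrix ℝ * Mm = Mm := by
    rw [hML, Matrix.sub_mul, Matrix.one_mul, Matrix.smul_mul, hJM, smul_zero, sub_zero]
  have g3 : G.lapMatrix ℝ * Mm = Mm * G.lapMatrix ℝ := by rw [hLM, hML]
  have hLsM : Lsharp = Mm := gi_unique (G.lapMatrix ℝ) Lsharp Mm hLs1 hLs2 hLs3 g1 g2 g3
  -- entries of Lsharp
  have hentry : ∀ x y : V, x ≠ y → Lsharp x y = a1 ∨ Lsharp x y = a2 ∨ Lsharp x y = a3 := by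
    intro x y hxy
    rw [hLsM, hMm]
    have h1 : G.dist x y ≠ 0 := fun h => hxy (hconn.dist_eq_zero_iff.mp h)
    have h3 := hdiamub x y
    have hadj : (G.adjMatrix ℝ) x y = if G.dist x y = 1 then (1:ℝ) else 0 := by
      simp [dist_eq_one_iff_adj]
    simp only [Matrix.add_apply, Matrix.smul_apply, Matrix.one_apply_ne hxy, Dmat_apply,
      hadj, smul_eq_mul]
    obtain ⟨j, hj⟩ : ∃ j, G.dist x y = j := ⟨_, rfl⟩
    rw [hj] at h1 h3 ⊢
    interval_cases j
    · exact absurd rfl h1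
    · left; norm_num
    · right; left; norm_num
    · right; right; norm_num
  -- an adjacent pair
  obtain ⟨z0, hz0⟩ : ∃ z, G.Adj x0 z := by
    have hdpos : 0 < G.degree x0 := by rw [hdeg]; omega
    exact (G.degree_pos_iff_exists_adj x0).mp hdpos
  have hne0 : x0 ≠ z0 := G.ne_of_adj hz0
  have hLx0 : Lsharp x0 z0 = a1 := by
    rw [hLsM, hMm]
    have hd : G.dist x0 z0 = 1 := dist_eq_one_iff_adj.mpr hz0
    simp [Matrix.add_apply, Matrix.smul_apply, Matrix.one_apply_ne hne0, hd, hz0]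
  -- positivity facts
  have hnpos : (0:ℝ) < nR := by linarith
  have hkpos : (0:ℝ) < kR := by linarith
  have hμpos : (0:ℝ) < μR := by linarith
  have hdenpos : (0:ℝ) < nR^2*kR*μR^2 := by positivity
  constructor
  · constructor
    · intro hM
      refine ⟨?_, hμk⟩
      have ha1le : a1 ≤ 0 := hLx0 ▸ hM x0 z0 hne0
      rw [ha1] at ha1le
      have hnum : (kR-1)*(2*kR-μR)^2 - kR*μR*(kR-1+μR) ≤ 0 := by
        rcases div_nonpos_iff.mp ha1le with ⟨h, h'⟩ | ⟨h, h'⟩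
        · linarith
        · exact h
      by_contra hcon
      push_neg at hcon
      have hcast : 5*μR + 1 ≤ 4*kR := by
        have : 5*μ + 1 ≤ 4*k := by omega
        rw [hkRdef, hμRdef]
        exact_mod_cast this
      have t1 : 0 ≤ kR*(kR-1)*(4*kR-5*μR-1) :=
        mul_nonneg (mul_nonneg (by linarith) (by linarith)) (by linarith)
      have t2 : 0 ≤ μR*((kR-1)-μR) := mul_nonneg (by linarith) (by linarith)
      have t3 : 0 ≤ (kR-1)*((kR-1)-μR) := mul_nonneg (by linarith) (by linarith)
      nlinarith [t1, t2, t3, hkR2]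
    · rintro ⟨h45, -⟩
      have hcast : 4*kR ≤ 5*μR := by
        rw [hkRdef, hμRdef]; exact_mod_cast h45
      have hnum : (kR-1)*(2*kR-μR)^2 - kR*μR*(kR-1+μR) ≤ 0 := by
        nlinarith [hμR1, hμRk, hkR2, sq_nonneg μR]
      have ha1le : a1 ≤ 0 := by
        rw [ha1]
        exact div_nonpos_of_nonpos_of_nonneg hnum (le_of_lt hdenpos)
      have ha2le : a2 ≤ 0 := by
        rw [ha2]
        have : 0 < (2*kR-μR)/(nR*kR*μR) := by
          apply div_pos (by linarith) (by positivity)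
        linarith
      have ha3le : a3 ≤ 0 := by
        rw [ha3]
        have : 0 < 1/(nR*kR) := by positivity
        linarith
      intro x y hxy
      rcases hentry x y hxy with h | h | h <;> rw [h] <;> assumption
  · rintro ⟨h45, -⟩
    omega
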